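/- Let M and N be von Neumann algebras. Suppose there exist a central projection q of N and a Jordan *-isomorphism from M onto the corner Nq := {xq : x ∈ N}, and a central projection p of M and a Jordan *-isomorphism from N onto the corner Mp := {xp : x ∈ M}. Then there exists a Jordan *-isomorphism from M onto N. -/

import Mathlib

variable {H : Type*} [NormedAddCommGroup H] [InnerProductSpace ℂ H] [CompleteSpace H]

/-- `p` is a projection in the von Neumann algebra `M`: `p ∈ M`, `p = p*`, `p = p²`. -/
def IsProjectionIn (M : VonNeumannAlgebra H) (p : H →L[ℂ] H) : Prop :=
  p ∈ M ∧ star p = p ∧ p * p = p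

/-- `r` is a central projection of `M`. -/
def IsCentralProjection (M : VonNeumannAlgebra H) (r : H →L[ℂ] H) : Prop :=
  IsProjectionIn M r ∧ ∀ x ∈ M, r * x = x * r

/-- `q` is unitarily equivalent to `p` by a unitary of `M`. -/
def UnitarilyEquivIn (M : VonNeumannAlgebra H) (p q : H →L[ℂ] H) : Prop :=
  ∃ u ∈ M, star u * u = 1 ∧ u * star u = 1 ∧ q = u * p * star u

/-- `P` is the Grassmann space of some projection of `M`. -/
def IsGrassmannSpace (M : VonNeumannAlgebra H) (P : Set (H →L[ℂ] H)) : Prop :=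
  ∃ p, IsProjectionIn M p ∧ P = {q | UnitarilyEquivIn M p q}

/-- `P` is a proper Grassmann space in `M`. -/
def IsProperGrassmannSpace (M : VonNeumannAlgebra H) (P : Set (H →L[ℂ] H)) : Prop :=
  IsGrassmannSpace M P ∧
    ∀ p ∈ P, ∀ z, IsCentralProjection M z →
      (z * p = p → z = 1) ∧ (z * (1 - p) = 1 - p → z = 1)

/-- `J` restricts to a Jordan `*`-isomorphism from the set `S` onto the set `S'`. -/
def IsJordanStarIsoOn {A B : Type*} [Ring A] [Ring B] [Module ℂ A] [Module ℂ B]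
    [Star A] [Star B] (S : Set A) (S' : Set B) (J : A → B) : Prop :=
  Set.BijOn J S S' ∧
  (∀ x ∈ S, ∀ y ∈ S, J (x + y) = J x + J y) ∧
  (∀ (c : ℂ), ∀ x ∈ S, J (c • x) = c • J x) ∧
  (∀ x ∈ S, J (star x) = star (J x)) ∧
  (∀ x ∈ S, ∀ y ∈ S, J (x * y + y * x) = J x * J y + J y * J x)

/-! ### Auxiliary lemmas -/

lemma half_eq {V : Type*} [AddCommGroup V] [Module ℂ V] {a b : V}
    (h : a + a = b + b) : a = b := by
  have h2 : (2 : ℂ) • a = (2 : ℂ) • b := by rw [two_smul, two_smul]; exact h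
  calc a = (2:ℂ)⁻¹ • ((2:ℂ) • a) := (inv_smul_smul₀ two_ne_zero a).symm
    _ = (2:ℂ)⁻¹ • ((2:ℂ) • b) := by rw [h2]
    _ = b := inv_smul_smul₀ two_ne_zero b

lemma idem_jordan_exp {R : Type*} [Ring R] {z x : R} (hz : z * z = z) :
    z * (z*x + x*z) + (z*x + x*z) * z = (z*x + x*z) + (z*x*z + z*x*z) := by
  have h1 : x * z * z = x * z := by rw [mul_assoc, hz]
  have h2 : z * (z * x) = z * x := by rw [← mul_assoc, hz]
  have h3 : z * (x * z) = z * x * z := by rw [← mul_assoc]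
  simp only [mul_add, add_mul, h1, h2, h3]
  abel

lemma idem_comm {R : Type*} [Ring R] {z x : R} (hz : z * z = z)
    (h : z*x*z + z*x*z = z*x + x*z) : z * x = x * z := by
  have l := congrArg (fun t => z * t) h
  have r := congrArg (fun t => t * z) h
  simp only [mul_add, add_mul] at l r
  have e1 : z * (z*x*z) = z*x*z := by rw [← mul_assoc, ← mul_assoc, hz]
  have e2 : z * (z*x) = z*x := by rw [← mul_assoc, hz]
  have e3 : z * (x*z) = z*x*z := (mul_assoc z x z).symm
  rw [e1, e2, e3] at l
  have hzx : z*x*z = z*x := add_right_cancel l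
  have e4 : z*x*z*z = z*x*z := by rw [mul_assoc, hz]
  have e5 : x*z*z = x*z := by rw [mul_assoc, hz]
  rw [e4, e5] at r
  calc z*x = z*x*z := hzx.symm
    _ = x*z := add_left_cancel r

lemma cross_add {R : Type*} [Ring R] {a b c d : R} (h1 : a*d = 0) (h2 : d*a = 0)
    (h3 : c*b = 0) (h4 : b*c = 0) :
    (a+b)*(c+d) + (c+d)*(a+b) = (a*c + c*a) + (b*d + d*b) := by
  simp only [mul_add, add_mul, h1, h2, h3, h4]
  abel

lemma jordan_central {A B : Type*} [Ring A] [Ring B] [Module ℂ A] [Module ℂ B]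
    [Star A] [Star B] {S : Set A} {S' : Set B} {J : A → B}
    (hJ : IsJordanStarIsoOn S S' J)
    (hmulS : ∀ x ∈ S, ∀ y ∈ S, x * y ∈ S)
    {z : A} (hzS : z ∈ S) (hz2 : z * z = z) (hzc : ∀ x ∈ S, z * x = x * z) :
    (J z * J z = J z) ∧ (∀ x ∈ S, J (z * x) = J z * J x ∧ J z * J x = J x * J z) := by
  obtain ⟨hbij, hadd, hsmul, hstar, hjord⟩ := hJ
  have hsq : J z * J z = J z := by
    have h1 := hjord z hzS z hzS
    rw [hz2, hadd z hzS z hzS] at h1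
    exact (half_eq h1).symm
  refine ⟨hsq, fun x hx => ?_⟩
  have hzx : z * x ∈ S := hmulS z hzS x hx
  have hi : J (z*x) + J (z*x) = J z * J x + J x * J z := by
    have h := hjord z hzS x hx
    rw [← hzc x hx, hadd _ hzx _ hzx] at h
    exact h
  have hii : J (z*x) + J (z*x) = J z * J (z*x) + J (z*x) * J z := by
    have h := hjord z hzS (z*x) hzx
    have e1 : z * (z*x) = z*x := by rw [← mul_assoc, hz2]
    have e2 : (z*x)*z = z*x := by rw [mul_assoc, ← hzc x hx, ← mul_assoc, hz2]
    rw [e1, e2, hadd _ hzx _ hzx] at h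
    exact h
  set ρ := J z with hρ
  set a := J x with ha
  set b := J (z*x) with hb
  have hl : ρ * b = ρ * b * ρ := by
    have l := congrArg (fun t => ρ * t) hii
    simp only [mul_add, ← mul_assoc, hsq] at l
    exact add_left_cancel l
  have hr : b * ρ = ρ * (b * ρ) := by
    have r := congrArg (fun t => t * ρ) hii
    simp only [add_mul, mul_assoc, hsq] at r
    exact add_right_cancel r
  have hbρ : b = ρ * b * ρ := by
    have h := hii
    rw [hl, hr] at h
    rw [mul_assoc]
    exact half_eq (h.trans (by rw [← mul_assoc]))
  have hb1 : ρ * b = b := hl.trans hbρ.symm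
  have hb2 : b * ρ = b := by rw [hr, ← mul_assoc]; exact hbρ.symm
  have l2 : b + b = ρ*a + ρ*a*ρ := by
    have l := congrArg (fun t => ρ * t) hi
    simp only [mul_add, ← mul_assoc, hsq] at l
    rw [hb1] at l
    exact l
  have haρ : a*ρ = ρ*a*ρ := add_left_cancel (hi.symm.trans l2)
  have r2 : b + b = ρ*(a*ρ) + a*ρ := by
    have r := congrArg (fun t => t * ρ) hi
    simp only [add_mul, mul_assoc, hsq] at r
    rw [hb2] at r
    exact r
  have hρa : ρ*a = ρ*a*ρ := by
    have h := add_right_cancel (hi.symm.trans r2)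
    exact h.trans (mul_assoc ρ a ρ).symm
  have hcomm : ρ*a = a*ρ := hρa.trans haρ.symm
  have hmulJ : b = ρ * a := half_eq (hi.trans (by rw [← hcomm]))
  exact ⟨hmulJ, hcomm⟩

lemma corner_spec {H : Type*} [NormedAddCommGroup H] [InnerProductSpace ℂ H] [CompleteSpace H]
    (M : VonNeumannAlgebra H) {c : H →L[ℂ] H} (hc : IsCentralProjection M c)
    {y : H →L[ℂ] H} (hy : ∃ x ∈ M, y = x * c) : y ∈ M ∧ y * c = y ∧ c * y = y := by
  obtain ⟨x, hx, rfl⟩ := hy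
  obtain ⟨⟨hcM, hcs, hc2⟩, hcc⟩ := hc
  refine ⟨mul_mem hx hcM, by rw [mul_assoc, hc2], ?_⟩
  rw [← mul_assoc, hcc x hx, mul_assoc, hc2]

lemma exists_sup_projection {H : Type*} [NormedAddCommGroup H] [InnerProductSpace ℂ H]
    [CompleteSpace H] (F : ℕ → (H →L[ℂ] H)) :
    ∃ G : H →L[ℂ] H, star G = G ∧ G * G = G ∧
      (∀ k, G * F k = F k) ∧
      (∀ z : H →L[ℂ] H, (∀ k, z * F k = F k) → z * G = G) ∧
      (∀ z : H →L[ℂ] H, (∀ k, z * F k = 0) → z * G = 0) ∧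
      (∀ z : H →L[ℂ] H, (∀ k, z * F k = F k * z) → (∀ k, star z * F k = F k * star z) →
        z * G = G * z) := by
  set V₀ : Submodule ℂ H := ⨆ k, LinearMap.range (F k : H →ₗ[ℂ] H) with hV₀
  set V := V₀.topologicalClosure with hV
  have hVc : IsClosed (V : Set H) := Submodule.isClosed_topologicalClosure V₀
  haveI : CompleteSpace V := hVc.completeSpace_coe
  set G : H →L[ℂ] H := V.subtypeL ∘L Submodule.orthogonalProjectionOnto V with hG
  have hGmem : ∀ v, G v ∈ V := fun v => (Submodule.orthogonalProjectionOnto V v).2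
  have hGfix : ∀ v ∈ V, G v = v := fun v hv => Submodule.starProjection_eq_self_iff.mpr hv
  have hstar : star G = G := isSelfAdjoint_starProjection V
  have hidem : G * G = G := by
    ext v
    exact hGfix _ (hGmem v)
  have hVle : ∀ k v, F k v ∈ V :=
    fun k v => Submodule.le_topologicalClosure V₀
      (le_iSup (fun k => LinearMap.range (F k : H →ₗ[ℂ] H)) k (LinearMap.mem_range_self _ v))
  have hfix2 : ∀ k, G * F k = F k := by
    intro k
    ext v
    exact hGfix _ (hVle k v)
  have key : ∀ (W : Submodule ℂ H), IsClosed (W : Set H) → (∀ k v, F k v ∈ W) →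
      ∀ v ∈ V, v ∈ W := by
    intro W hWc hWF v hv
    have hle : V₀ ≤ W := iSup_le fun k => by
      rintro _ ⟨w, rfl⟩
      exact hWF k w
    exact V₀.topologicalClosure_minimal hle hWc hv
  refine ⟨G, hstar, hidem, hfix2, ?_, ?_, ?_⟩
  · intro z hz
    ext v
    have h1 : ∀ u ∈ V, z u = u := by
      intro u hu
      have h2 := key (LinearMap.ker ((z - 1 : H →L[ℂ] H) : H →ₗ[ℂ] H)) (ContinuousLinearMap.isClosed_ker (z - 1 : H →L[ℂ] H)) ?_ u hu
      · have h3 : (z - 1) u = 0 := h2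
        rw [ContinuousLinearMap.sub_apply, ContinuousLinearMap.one_apply, sub_eq_zero] at h3
        exact h3
      · intro k w
        have h4 : (z * F k) w = F k w := by rw [hz k]
        rw [ContinuousLinearMap.mul_apply] at h4
        show (z - 1) (F k w) = 0
        rw [ContinuousLinearMap.sub_apply, ContinuousLinearMap.one_apply, h4, sub_self]
    exact h1 _ (hGmem v)
  · intro z hz
    ext v
    have h1 : ∀ u ∈ V, z u = 0 := by
      intro u hu
      exact key (LinearMap.ker z) (ContinuousLinearMap.isClosed_ker _) (fun k w => by
        have h4 : (z * F k) w = 0 := by rw [hz k]; rfl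
        rw [ContinuousLinearMap.mul_apply] at h4
        exact h4) u hu
    exact h1 _ (hGmem v)
  · intro z hz hz'
    have inv : ∀ (y : H →L[ℂ] H), (∀ k, y * F k = F k * y) → ∀ u ∈ V, y u ∈ V := by
      intro y hy u hu
      have hWc : IsClosed ((Submodule.comap (y : H →ₗ[ℂ] H) V : Submodule ℂ H) : Set H) := by
        have he : ((Submodule.comap (y : H →ₗ[ℂ] H) V : Submodule ℂ H) : Set H)
            = y ⁻¹' (V : Set H) := rfl
        rw [he]
        exact hVc.preimage y.continuous
      exact key (Submodule.comap (y : H →ₗ[ℂ] H) V) hWc (fun k w => by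
        show y (F k w) ∈ V
        have h4 : (y * F k) w = (F k * y) w := by rw [hy k]
        rw [ContinuousLinearMap.mul_apply, ContinuousLinearMap.mul_apply] at h4
        rw [h4]
        exact hVle k (y w)) u hu
    have hA : G * (z * G) = z * G := by
      ext v
      simp only [ContinuousLinearMap.mul_apply]
      exact hGfix _ (inv z hz _ (hGmem v))
    have hB : G * (star z * G) = star z * G := by
      ext v
      simp only [ContinuousLinearMap.mul_apply]
      exact hGfix _ (inv (star z) hz' _ (hGmem v))
    have hC := congrArg star hB
    simp only [star_mul, hstar, star_star] at hC
    rw [← mul_assoc] at hA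
    rw [mul_assoc] at hC
    exact (hC.symm.trans hA).symm

/-- If `M` is Jordan `*`-isomorphic to a direct summand of `N` and `N` is Jordan
`*`-isomorphic to a direct summand of `M`, then `M` and `N` are Jordan
`*`-isomorphic. -/
theorem stmt_13 {H : Type*} [NormedAddCommGroup H] [InnerProductSpace ℂ H] [CompleteSpace H]
    {K : Type*} [NormedAddCommGroup K] [InnerProductSpace ℂ K] [CompleteSpace K]
    (M : VonNeumannAlgebra H) (N : VonNeumannAlgebra K)
    (p : H →L[ℂ] H) (q : K →L[ℂ] K)
    (hp : IsCentralProjection M p) (hq : IsCentralProjection N q)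
    (h1 : ∃ J : (H →L[ℂ] H) → (K →L[ℂ] K),
      IsJordanStarIsoOn {x | x ∈ M} {y | ∃ x ∈ N, y = x * q} J)
    (h2 : ∃ J : (K →L[ℂ] K) → (H →L[ℂ] H),
      IsJordanStarIsoOn {x | x ∈ N} {y | ∃ x ∈ M, y = x * p} J) :
    ∃ J : (H →L[ℂ] H) → (K →L[ℂ] K), IsJordanStarIsoOn {x | x ∈ M} {y | y ∈ N} J := by
  obtain ⟨Φ, hΦ⟩ := h1
  obtain ⟨Ψ, hΨ⟩ := h2
  have hqN : q ∈ N := hq.1.1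
  have hpM : p ∈ M := hp.1.1
  have hp2 : p * p = p := hp.1.2.2
  have hpc : ∀ x ∈ M, p * x = x * p := hp.2
  -- members of the corner Nq lie in N
  have hCqN : ∀ y : K →L[ℂ] K, (∃ x ∈ N, y = x * q) → y ∈ N :=
    fun y hy => (corner_spec N hq hy).1
  -- the projection r = Ψ q
  set r : H →L[ℂ] H := Ψ q with hr_def
  have hrCp : ∃ x ∈ M, r = x * p := hΨ.1.1 hqN
  obtain ⟨hr_mem, hr_p, hr_pr⟩ := corner_spec M hp hrCp
  have hcq := jordan_central hΨ (fun x hx y hy => show x*y ∈ N from mul_mem hx hy) hqN hq.1.2.2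
    (fun x hx => hq.2 x hx)
  have hr2 : r * r = r := hcq.1
  have hrs : star r = r := by
    have h := hΨ.2.2.2.1 q hqN
    rw [hq.1.2.1] at h
    exact h.symm
  have hrc : ∀ m ∈ M, r * m = m * r := by
    intro m hm
    obtain ⟨n, hn, hΨn⟩ := hΨ.1.2.2 (show ∃ x ∈ M, m * p = x * p from ⟨m, hm, rfl⟩)
    have h1 : r * (m * p) = (m * p) * r := by rw [← hΨn]; exact (hcq.2 n hn).2
    calc r * m = r * p * m := by rw [hr_p]
      _ = r * (m * p) := by rw [mul_assoc, hpc m hm]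
      _ = (m * p) * r := h1
      _ = m * (p * r) := by rw [mul_assoc]
      _ = m * r := by rw [hr_pr]
  have hrcp : IsCentralProjection M r := ⟨⟨hr_mem, hrs, hr2⟩, hrc⟩
  have hΨq_mul : ∀ x ∈ N, Ψ (x * q) = Ψ x * r := by
    intro x hx
    rw [← hq.2 x hx, (hcq.2 x hx).1, (hcq.2 x hx).2]
  -- the composite map θ : M → Mr
  set θ : (H →L[ℂ] H) → (H →L[ℂ] H) := fun x => Ψ (Φ x) with hθ_def
  set Mr : Set (H →L[ℂ] H) := {y | ∃ x ∈ M, y = x * r} with hMr_def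
  have hΦN : ∀ x ∈ M, Φ x ∈ N := fun x hx => hCqN _ (hΦ.1.1 hx)
  have hθiso : IsJordanStarIsoOn {x | x ∈ M} Mr θ := by
    refine ⟨⟨?_, ?_, ?_⟩, ?_, ?_, ?_, ?_⟩
    · intro x hx
      obtain ⟨n, hn, hxq⟩ := hΦ.1.1 hx
      refine ⟨Ψ n, (corner_spec M hp (hΨ.1.1 hn)).1, ?_⟩
      show Ψ (Φ x) = Ψ n * r
      rw [hxq, hΨq_mul n hn]
    · intro x hx y hy h
      exact hΦ.1.2.1 hx hy (hΨ.1.2.1 (hΦN x hx) (hΦN y hy) h)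
    · intro y hy
      obtain ⟨m, hm, hy'⟩ := hy
      have hmr : ∃ x ∈ M, m * r = x * p := ⟨m * r, mul_mem hm hr_mem, by rw [mul_assoc, hr_p]⟩
      obtain ⟨n, hn, hΨn⟩ := hΨ.1.2.2 hmr
      have hΨnq : Ψ (n * q) = Ψ n := by
        rw [hΨq_mul n hn, hΨn, mul_assoc, hr2]
      have hnq : n * q = n := hΨ.1.2.1 (mul_mem hn hqN) hn hΨnq
      obtain ⟨x, hx, hΦx⟩ := hΦ.1.2.2 (show ∃ z ∈ N, n = z * q from ⟨n, hn, hnq.symm⟩)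
      exact ⟨x, hx, by show Ψ (Φ x) = y; rw [hΦx, hΨn, ← hy']⟩
    · intro x hx y hy
      show Ψ (Φ (x + y)) = Ψ (Φ x) + Ψ (Φ y)
      rw [hΦ.2.1 x hx y hy, hΨ.2.1 _ (hΦN x hx) _ (hΦN y hy)]
    · intro c x hx
      show Ψ (Φ (c • x)) = c • Ψ (Φ x)
      rw [hΦ.2.2.1 c x hx, hΨ.2.2.1 c _ (hΦN x hx)]
    · intro x hx
      show Ψ (Φ (star x)) = star (Ψ (Φ x))
      rw [hΦ.2.2.2.1 x hx, hΨ.2.2.2.1 _ (hΦN x hx)]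
    · intro x hx y hy
      show Ψ (Φ (x * y + y * x)) = Ψ (Φ x) * Ψ (Φ y) + Ψ (Φ y) * Ψ (Φ x)
      rw [hΦ.2.2.2.2 x hx y hy, hΨ.2.2.2.2 _ (hΦN x hx) _ (hΦN y hy)]
  have hθM : ∀ x ∈ M, θ x ∈ M := fun x hx => (corner_spec M hrcp (hθiso.1.1 hx)).1
  -- transport of central projections through θ
  have ctrans : ∀ z : H →L[ℂ] H, IsCentralProjection M z →
      IsCentralProjection M (θ z) ∧ (∀ x ∈ M, θ (z * x) = θ z * θ x) := by
    intro z hz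
    have hjc := jordan_central hθiso (fun a ha b hb => show a*b ∈ M from mul_mem ha hb)
      hz.1.1 hz.1.2.2 hz.2
    have hθzMr : θ z ∈ Mr := hθiso.1.1 hz.1.1
    obtain ⟨hθzM, hθzr, hθzr'⟩ := corner_spec M hrcp hθzMr
    have hcentral : ∀ m ∈ M, θ z * m = m * θ z := by
      intro m hm
      obtain ⟨x, hx, hθx⟩ := hθiso.1.2.2 (show (m*r) ∈ Mr from ⟨m, hm, rfl⟩)
      have hcomm : θ z * (m*r) = (m*r) * θ z := by rw [← hθx]; exact (hjc.2 x hx).2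
      calc θ z * m = (θ z * r) * m := by rw [hθzr]
        _ = θ z * (r * m) := mul_assoc _ _ _
        _ = θ z * (m * r) := by rw [hrc m hm]
        _ = m * r * θ z := hcomm
        _ = m * (r * θ z) := mul_assoc _ _ _
        _ = m * θ z := by rw [hθzr']
    have hθzs : star (θ z) = θ z := by
      have h := hθiso.2.2.2.1 z hz.1.1
      rw [hz.1.2.1] at h
      exact h.symm
    exact ⟨⟨⟨hθzM, hθzs, hjc.1⟩, hcentral⟩, fun x hx => (hjc.2 x hx).1⟩
  -- the decreasing sequence of central projections
  let E : ℕ → ((H →L[ℂ] H) × (H →L[ℂ] H)) :=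
    fun n => Nat.rec ((1 : H →L[ℂ] H), p) (fun _ ih => (ih.2, θ ih.1)) n
  let e : ℕ → (H →L[ℂ] H) := fun n => (E n).1
  have he0 : e 0 = 1 := rfl
  have he1 : e 1 = p := rfl
  have he2 : ∀ n, e (n + 2) = θ (e n) := fun n => rfl
  have h1cp : IsCentralProjection M 1 :=
    ⟨⟨one_mem M, star_one _, one_mul 1⟩, fun x _ => by rw [one_mul, mul_one]⟩
  have hkey : ∀ n, IsCentralProjection M (e n) ∧ e (n+1) * e n = e (n+1) := by
    intro n
    induction n using Nat.strong_induction_on with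
    | _ n ih =>
      match n with
      | 0 =>
        refine ⟨h1cp, ?_⟩
        show p * 1 = p
        rw [mul_one]
      | 1 =>
        refine ⟨hp, ?_⟩
        show θ (e 0) * p = θ (e 0)
        obtain ⟨c1M, c1r, c1r'⟩ := corner_spec M hrcp (hθiso.1.1 (show e 0 ∈ M from one_mem M))
        calc θ (e 0) * p = θ (e 0) * r * p := by rw [c1r]
          _ = θ (e 0) * (r * p) := mul_assoc _ _ _
          _ = θ (e 0) * r := by rw [hr_p]
          _ = θ (e 0) := c1r
      | (k+2) =>
        have ihk := ih k (by omega)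
        have ihk1 := ih (k+1) (by omega)
        refine ⟨(ctrans _ ihk.1).1, ?_⟩
        show θ (e (k+1)) * θ (e k) = θ (e (k+1))
        have h := (ctrans (e (k+1)) ihk1.1).2 (e k) ihk.1.1.1
        rw [ihk.2] at h
        exact h.symm
  have hle : ∀ n m, n ≤ m → e m * e n = e m := by
    intro n m h
    induction m, h using Nat.le_induction with
    | base => exact (hkey n).1.1.2.2
    | succ m hm ihm =>
      calc e (m+1) * e n = e (m+1) * e m * e n := by rw [(hkey m).2]
        _ = e (m+1) * (e m * e n) := mul_assoc _ _ _
        _ = e (m+1) * e m := by rw [ihm]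
        _ = e (m+1) := (hkey m).2
  have hle' : ∀ n m, n ≤ m → e n * e m = e m := by
    intro n m h
    rw [(hkey n).1.2 (e m) (hkey m).1.1.1]
    exact hle n m h
  -- the differences
  set f : ℕ → (H →L[ℂ] H) := fun n => e n - e (n+1) with hf_def
  have hfM : ∀ n, f n ∈ M := fun n => sub_mem (hkey n).1.1.1 (hkey (n+1)).1.1.1
  have hfs : ∀ n, star (f n) = f n := fun n => by
    show star (e n - e (n+1)) = e n - e (n+1)
    rw [star_sub, (hkey n).1.1.2.1, (hkey (n+1)).1.1.2.1]
  have hf2 : ∀ n, f n * f n = f n := by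
    intro n
    show (e n - e (n+1)) * (e n - e (n+1)) = e n - e (n+1)
    have h1 : e n * e n = e n := (hkey n).1.1.2.2
    have h2 : e n * e (n+1) = e (n+1) := hle' n (n+1) (by omega)
    have h3 : e (n+1) * e n = e (n+1) := hle n (n+1) (by omega)
    have h4 : e (n+1) * e (n+1) = e (n+1) := (hkey (n+1)).1.1.2.2
    simp only [sub_mul, mul_sub, h1, h2, h3, h4]
    abel
  have hfc : ∀ n, ∀ x ∈ M, f n * x = x * f n := by
    intro n x hx
    show (e n - e (n+1)) * x = x * (e n - e (n+1))
    rw [sub_mul, mul_sub, (hkey n).1.2 x hx, (hkey (n+1)).1.2 x hx]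
  have hfcp : ∀ n, IsCentralProjection M (f n) :=
    fun n => ⟨⟨hfM n, hfs n, hf2 n⟩, hfc n⟩
  have horth : ∀ n m, n < m → f n * f m = 0 := by
    intro n m h
    show (e n - e (n+1)) * (e m - e (m+1)) = 0
    have h1 : e n * e m = e m := hle' n m (by omega)
    have h2 : e n * e (m+1) = e (m+1) := hle' n (m+1) (by omega)
    have h3 : e (n+1) * e m = e m := hle' (n+1) m (by omega)
    have h4 : e (n+1) * e (m+1) = e (m+1) := hle' (n+1) (m+1) (by omega)
    simp only [sub_mul, mul_sub, h1, h2, h3, h4]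
    abel
  have hθsub : ∀ a ∈ M, ∀ b ∈ M, θ (a - b) = θ a - θ b := by
    intro a ha b hb
    have h := hθiso.2.1 (a-b) (sub_mem ha hb) b hb
    rw [sub_add_cancel] at h
    exact (eq_sub_of_add_eq h.symm)
  have hθf : ∀ n, θ (f n) = f (n+2) := by
    intro n
    show θ (e n - e (n+1)) = e (n+2) - e (n+3)
    rw [hθsub _ (hkey n).1.1.1 _ (hkey (n+1)).1.1.1, he2 n, he2 (n+1)]
  have hf0 : f 0 = 1 - p := rfl
  have hfp : ∀ n, f (n+1) * p = f (n+1) := by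
    intro n
    show (e (n+1) - e (n+2)) * e 1 = e (n+1) - e (n+2)
    rw [sub_mul, hle 1 (n+1) (by omega), hle 1 (n+2) (by omega)]
  have hfr : ∀ k, f (2*k+2) * r = f (2*k+2) := by
    intro k
    have h : θ (f (2*k)) ∈ Mr := hθiso.1.1 (hfM (2*k))
    rw [hθf (2*k)] at h
    exact (corner_spec M hrcp h).2.1
  -- the supremum projection G of the even differences f 2, f 4, ...
  obtain ⟨G, hGs, hG2, hGfix, hGmin, hGann, hGcomm⟩ :=
    exists_sup_projection (fun k => f (2*k+2))
  have hGM : G ∈ M := by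
    have hcen : ∀ y ∈ Set.centralizer (M : Set (H →L[ℂ] H)), y * G = G * y := by
      intro y hy
      refine hGcomm y (fun k => (hy _ (hfM (2*k+2))).symm) (fun k => ?_)
      have hys : ∀ m ∈ M, m * star y = star y * m := by
        intro m hm
        have h := hy (star m) (star_mem hm)
        have h2 := congrArg star h
        rw [star_mul, star_mul, star_star] at h2
        exact h2.symm
      exact (hys _ (hfM (2*k+2))).symm
    have hmem : G ∈ Set.centralizer (Set.centralizer (M : Set (H →L[ℂ] H))) :=
      fun y hy => hcen y hy
    rw [M.centralizer_centralizer] at hmem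
    exact hmem
  have hGc : ∀ m ∈ M, G * m = m * G := by
    intro m hm
    exact (hGcomm m (fun k => ((hfcp (2*k+2)).2 m hm).symm)
      (fun k => ((hfcp (2*k+2)).2 (star m) (star_mem hm)).symm)).symm
  have hGcp : IsCentralProjection M G := ⟨⟨hGM, hGs, hG2⟩, hGc⟩
  have hrG : r * G = G := hGmin r (fun k => by
    rw [hrc _ (hfM (2*k+2))]; exact hfr k)
  have hGr : G * r = G := (hGc r hr_mem).trans hrG
  have hpG : p * G = G := hGmin p (fun k => by
    rw [hpc _ (hfM (2*k+2))]; exact hfp (2*k+1))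
  have hGp : G * p = G := (hGc p hpM).trans hpG
  have hf0G : f 0 * G = 0 := hGann (f 0) (fun k => horth 0 (2*k+2) (by omega))
  have hGf0 : G * f 0 = 0 := by
    have h := congrArg star hf0G
    rwa [star_mul, hGs, hfs, star_zero] at h
  have hGfk : ∀ k, G * f (2*k+2) = f (2*k+2) := hGfix
  have hfkG : ∀ k, f (2*k+2) * G = f (2*k+2) :=
    fun k => ((hfcp (2*k+2)).2 G hGM).trans (hGfk k)
  -- the central projection g
  set g : H →L[ℂ] H := f 0 + G with hg_def
  have hgM : g ∈ M := add_mem (hfM 0) hGM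
  have hgs : star g = g := by rw [hg_def, star_add, hfs, hGs]
  have hg2 : g * g = g := by
    rw [hg_def]
    simp only [add_mul, mul_add, hf2 0, hf0G, hGf0, hG2]
    abel
  have hgc : ∀ m ∈ M, g * m = m * g := by
    intro m hm
    rw [hg_def, add_mul, mul_add, (hfcp 0).2 m hm, hGc m hm]
  have hgcp : IsCentralProjection M g := ⟨⟨hgM, hgs, hg2⟩, hgc⟩
  have h1g : (1 : H →L[ℂ] H) - g = p - G := by
    rw [hg_def, hf0]
    abel
  have hgG : g * G = G := by
    rw [hg_def, add_mul, hf0G, hG2, zero_add]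
  have hGg : G * g = G := by
    rw [hg_def, mul_add, hGf0, hG2, zero_add]
  -- g * f (2k) = f (2k)
  have hgf : ∀ k, g * f (2*k) = f (2*k) := by
    intro k
    rcases k with _ | k
    · show g * f (2*0) = f (2*0)
      have h0 : (2*0 : ℕ) = 0 := rfl
      rw [h0, hg_def, add_mul, hf2 0, hGf0, add_zero]
    · have h2 : 2*(k+1) = 2*k+2 := by ring
      rw [h2, hg_def, add_mul, horth 0 (2*k+2) (by omega), hGfk k, zero_add]
  -- θ g = G
  have hctr := ctrans g hgcp
  have hg'f : ∀ k, θ g * f (2*k+2) = f (2*k+2) := by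
    intro k
    have h := hctr.2 (f (2*k)) (hfM (2*k))
    rw [hgf k, hθf (2*k)] at h
    exact h.symm
  have hg'G : θ g * G = G := hGmin (θ g) hg'f
  have hGMr : G ∈ Mr := ⟨G, hGM, hGr.symm⟩
  obtain ⟨w, hwM, hθw⟩ := hθiso.1.2.2 hGMr
  have hw2 : w * w = w := by
    have h := hθiso.2.2.2.2 w hwM w hwM
    rw [hθw, hG2] at h
    have h2 : θ (w*w + w*w) = θ (w + w) := by
      rw [h, hθiso.2.1 w hwM w hwM, hθw]
    have h3 := hθiso.1.2.1 (show w*w + w*w ∈ M from add_mem (mul_mem hwM hwM) (mul_mem hwM hwM))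
      (show w + w ∈ M from add_mem hwM hwM) h2
    exact half_eq h3
  have hws : star w = w := by
    have h := hθiso.2.2.2.1 w hwM
    rw [hθw, hGs] at h
    exact hθiso.1.2.1 (show star w ∈ M from star_mem hwM) hwM (h.trans hθw.symm)
  have hwc : ∀ x ∈ M, w * x = x * w := by
    intro x hx
    set u := w*x + x*w with hu_def
    have huM : u ∈ M := add_mem (mul_mem hwM hx) (mul_mem hx hwM)
    have hθxM : θ x ∈ M := hθM x hx
    have hθu : θ u = G * θ x + θ x * G := by
      rw [hu_def, hθiso.2.2.2.2 w hwM x hx, hθw]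
    have hwxwM : w*x*w ∈ M := mul_mem (mul_mem hwM hx) hwM
    have hexp : w * u + u * w = u + (w*x*w + w*x*w) := idem_jordan_exp hw2
    have hjord2 := hθiso.2.2.2.2 w hwM u huM
    rw [hθw] at hjord2
    have hGexp : G * θ u + θ u * G = θ u + (G*θ x*G + G*θ x*G) := by
      rw [hθu]; exact idem_jordan_exp hG2
    have hLHS : θ (w*u + u*w) = θ u + (θ (w*x*w) + θ (w*x*w)) := by
      rw [hexp, hθiso.2.1 u huM _ (show w*x*w + w*x*w ∈ M from add_mem hwxwM hwxwM),
        hθiso.2.1 _ hwxwM _ hwxwM]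
    have heq : θ u + (θ (w*x*w) + θ (w*x*w)) = θ u + (G*θ x*G + G*θ x*G) := by
      rw [← hLHS, hjord2, hGexp]
    have hq2 : θ (w*x*w) = G * θ x * G := half_eq (add_left_cancel heq)
    have hq3 : G * θ x * G = G * θ x := by
      rw [mul_assoc, ← hGc _ hθxM, ← mul_assoc, hG2]
    have hq4 : θ (w*x*w + w*x*w) = θ u := by
      rw [hθiso.2.1 _ hwxwM _ hwxwM, hq2, hq3, hθu, ← hGc _ hθxM]
    have hq5 := hθiso.1.2.1 (show w*x*w + w*x*w ∈ M from add_mem hwxwM hwxwM) huM hq4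
    exact idem_comm hw2 hq5
  have hwcp : IsCentralProjection M w := ⟨⟨hwM, hws, hw2⟩, hwc⟩
  have hwf : ∀ k, w * f (2*k) = f (2*k) := by
    intro k
    have h := (ctrans w hwcp).2 (f (2*k)) (hfM (2*k))
    rw [hθw] at h
    have h2 : θ (w * f (2*k)) = θ (f (2*k)) := by
      rw [h, hθf (2*k), hGfk k, ← hθf (2*k)]
    exact hθiso.1.2.1 (show w * f (2*k) ∈ M from mul_mem hwM (hfM (2*k))) (hfM (2*k)) h2
  have hwG : w * G = G := hGmin w (fun k => by
    have h2 : 2*(k+1) = 2*k+2 := by ring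
    have h := hwf (k+1)
    rw [h2] at h
    exact h)
  have hwg : w * g = g := by
    rw [hg_def, mul_add, hwG]
    have h := hwf 0
    have h0 : (2*0 : ℕ) = 0 := rfl
    rw [h0] at h
    rw [h]
  have hθg : θ g = G := by
    have hθwg := (ctrans w hwcp).2 g hgM
    rw [hwg, hθw] at hθwg
    calc θ g = G * θ g := hθwg
      _ = θ g * G := (hctr.1.2 G hGM).symm
      _ = G := hg'G
  -- the Jordan *-isomorphism J0 : M → Mp
  have hθxg : ∀ x ∈ M, θ (x * g) = G * θ x := by
    intro x hx
    rw [← hgc x hx, (ctrans g hgcp).2 x hx, hθg]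
  have hθxgG : ∀ x ∈ M, θ (x*g) * G = θ (x*g) := by
    intro x hx
    rw [hθxg x hx, mul_assoc, ← hGc (θ x) (hθM x hx), ← mul_assoc, hG2]
  have hGθxg : ∀ x ∈ M, G * θ (x*g) = θ (x*g) := by
    intro x hx
    rw [hGc _ (hθM _ (mul_mem hx hgM))]
    exact hθxgG x hx
  have hθxgp : ∀ x ∈ M, θ (x*g) * p = θ (x*g) := by
    intro x hx
    have h := (corner_spec M hrcp (hθiso.1.1 (show x*g ∈ M from mul_mem hx hgM))).2.1
    rw [← h, mul_assoc, hr_p, h]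
  have h1gp : ((1 : H →L[ℂ] H) - g) * p = 1 - g := by rw [h1g, sub_mul, hp2, hGp]
  have hGsub : ∀ y ∈ M, G * (y - y*g) = 0 := by
    intro y hy
    rw [mul_sub, hGc y hy, hGc (y*g) (mul_mem hy hgM), mul_assoc, hgG, sub_self]
  have hsubG : ∀ y ∈ M, (y - y*g) * G = 0 := by
    intro y hy
    rw [sub_mul, mul_assoc, hgG, sub_self]
  have hcrossL : ∀ x ∈ M, ∀ y ∈ M, θ (x*g) * (y - y*g) = 0 := by
    intro x hx y hy
    rw [← hθxgG x hx, mul_assoc, hGsub y hy, mul_zero]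
  have hcrossR : ∀ x ∈ M, ∀ y ∈ M, (x - x*g) * θ (y*g) = 0 := by
    intro x hx y hy
    rw [← hGθxg y hy, ← mul_assoc, hsubG x hx, zero_mul]
  have hprod : ∀ x ∈ M, ∀ y ∈ M, (x*g)*(y*g) = (x*y)*g := by
    intro x hx y hy
    rw [mul_assoc, hgc (y*g) (mul_mem hy hgM), mul_assoc y g g, hg2, ← mul_assoc]
  have hbd : ∀ x ∈ M, ∀ y ∈ M, (x - x*g)*(y - y*g) = x*y - (x*y)*g := by
    intro x hx y hy
    have h1 : (x*g)*y = (x*y)*g := by rw [mul_assoc, hgc y hy, ← mul_assoc]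
    have h2 : (x*g)*(y*g) = (x*y)*g := hprod x hx y hy
    have h3 : x*(y*g) = (x*y)*g := (mul_assoc x y g).symm
    simp only [sub_mul, mul_sub, h1, h2, h3]
    abel
  set J0 : (H →L[ℂ] H) → (H →L[ℂ] H) := fun x => θ (x * g) + (x - x * g) with hJ0_def
  have hJ0M : ∀ x ∈ M, J0 x ∈ M :=
    fun x hx => add_mem (hθM _ (mul_mem hx hgM)) (sub_mem hx (mul_mem hx hgM))
  have hJ0p : ∀ x ∈ M, J0 x * p = J0 x := by
    intro x hx
    show (θ (x*g) + (x - x*g)) * p = θ (x*g) + (x - x*g)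
    rw [add_mul, hθxgp x hx]
    congr 1
    calc (x - x*g)*p = (x*(1-g))*p := by rw [mul_one_sub]
      _ = x*((1-g)*p) := mul_assoc _ _ _
      _ = x*(1-g) := by rw [h1gp]
      _ = x - x*g := mul_one_sub _ _
  have hJ0G : ∀ x ∈ M, J0 x * G = θ (x*g) := by
    intro x hx
    show (θ (x*g) + (x - x*g)) * G = θ (x*g)
    rw [add_mul, hθxgG x hx, hsubG x hx, add_zero]
  have hJ0iso : IsJordanStarIsoOn {x | x ∈ M} {y | ∃ x ∈ M, y = x * p} J0 := by
    refine ⟨⟨?_, ?_, ?_⟩, ?_, ?_, ?_, ?_⟩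
    · intro x hx
      exact ⟨J0 x, hJ0M x hx, (hJ0p x hx).symm⟩
    · intro x hx y hy hxy
      have h1 : θ (x*g) = θ (y*g) := by rw [← hJ0G x hx, ← hJ0G y hy, hxy]
      have h2 : x*g = y*g := hθiso.1.2.1 (show x*g ∈ M from mul_mem hx hgM)
        (show y*g ∈ M from mul_mem hy hgM) h1
      have h4 : θ (x*g) + (x - x*g) = θ (x*g) + (y - y*g) := by
        calc θ (x*g) + (x - x*g) = J0 x := rfl
          _ = J0 y := hxy
          _ = θ (y*g) + (y - y*g) := rfl
          _ = θ (x*g) + (y - y*g) := by rw [h1]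
      have h3 : x - x*g = y - y*g := add_left_cancel h4
      calc x = (x - x*g) + x*g := (sub_add_cancel x (x*g)).symm
        _ = (y - y*g) + y*g := by rw [h3, h2]
        _ = y := sub_add_cancel y (y*g)
    · intro y hy
      obtain ⟨m, hm, hy'⟩ := hy
      have hmG : m * G ∈ Mr := ⟨m * G, mul_mem hm hGM, by rw [mul_assoc, hGr]⟩
      obtain ⟨a, ha, hθa⟩ := hθiso.1.2.2 hmG
      have hxM : a*g + (m - m*g) ∈ M :=
        add_mem (mul_mem ha hgM) (sub_mem hm (mul_mem hm hgM))
      refine ⟨a*g + (m - m*g), hxM, ?_⟩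
      have hxg : (a*g + (m - m*g))*g = a*g := by
        rw [add_mul, mul_assoc, hg2, sub_mul, mul_assoc, hg2, sub_self, add_zero]
      have hθxg2 : θ ((a*g + (m - m*g))*g) = m*G := by
        rw [hxg, hθxg a ha, hθa, hGc (m*G) (mul_mem hm hGM), mul_assoc, hG2]
      show J0 (a*g + (m - m*g)) = y
      rw [hy']
      show θ ((a*g + (m - m*g))*g) + ((a*g + (m - m*g)) - (a*g + (m - m*g))*g) = m*p
      rw [hθxg2, hxg]
      have hxsub : (a*g + (m - m*g)) - a*g = m - m*g := by abel
      rw [hxsub]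
      calc m*G + (m - m*g) = m*G + m*(1-g) := by rw [mul_one_sub]
        _ = m*G + m*(p - G) := by rw [h1g]
        _ = m*G + (m*p - m*G) := by rw [mul_sub]
        _ = m*p := by abel
    · intro x hx y hy
      show θ ((x+y)*g) + ((x+y) - (x+y)*g)
          = (θ (x*g) + (x - x*g)) + (θ (y*g) + (y - y*g))
      rw [add_mul, hθiso.2.1 _ (show x*g ∈ M from mul_mem hx hgM)
        _ (show y*g ∈ M from mul_mem hy hgM)]
      abel
    · intro c x hx
      show θ ((c • x)*g) + ((c • x) - (c • x)*g) = c • (θ (x*g) + (x - x*g))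
      rw [smul_mul_assoc, hθiso.2.2.1 c _ (show x*g ∈ M from mul_mem hx hgM),
        smul_add, smul_sub]
    · intro x hx
      show θ ((star x)*g) + (star x - (star x)*g) = star (θ (x*g) + (x - x*g))
      have hsg : (star x) * g = star (x*g) := by
        rw [star_mul, hgs, hgc (star x) (star_mem hx)]
      rw [hsg, hθiso.2.2.2.1 _ (show x*g ∈ M from mul_mem hx hgM), star_add, star_sub]
    · intro x hx y hy
      have hmain := hθiso.2.2.2.2 (x*g) (show x*g ∈ M from mul_mem hx hgM)
        (y*g) (show y*g ∈ M from mul_mem hy hgM)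
      have hca := cross_add (hcrossL x hx y hy) (hcrossR y hy x hx)
        (hcrossL y hy x hx) (hcrossR x hx y hy)
      show θ ((x*y + y*x)*g) + ((x*y + y*x) - (x*y + y*x)*g)
          = (θ (x*g) + (x - x*g)) * (θ (y*g) + (y - y*g))
            + (θ (y*g) + (y - y*g)) * (θ (x*g) + (x - x*g))
      have hA : θ ((x*y + y*x)*g) = θ (x*g) * θ (y*g) + θ (y*g) * θ (x*g) := by
        rw [add_mul, ← hprod x hx y hy, ← hprod y hy x hx]
        exact hmain
      have hB : (x*y + y*x) - (x*y + y*x)*g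
          = (x - x*g)*(y - y*g) + (y - y*g)*(x - x*g) := by
        rw [hbd x hx y hy, hbd y hy x hx, add_mul]
        abel
      rw [hA, hB, ← hca]
  -- compose with the inverse of Ψ
  have hsmulN : ∀ (c : ℂ), ∀ x ∈ N, c • x ∈ N := by
    intro c x hx
    have h1 : (algebraMap ℂ (K →L[ℂ] K) c) ∈ N := N.toStarSubalgebra.algebraMap_mem c
    have h2 := mul_mem h1 hx
    rwa [Algebra.algebraMap_eq_smul_one, smul_mul_assoc, one_mul] at h2
  set Ψinv : (H →L[ℂ] H) → (K →L[ℂ] K) := Function.invFunOn Ψ {x | x ∈ N} with hinv_def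
  have hinv_mem : ∀ y : H →L[ℂ] H, (∃ x ∈ M, y = x * p) → Ψinv y ∈ N := by
    intro y hy
    obtain ⟨n, hn, hΨn⟩ := hΨ.1.2.2 hy
    exact Function.invFunOn_mem ⟨n, hn, hΨn⟩
  have hinv_eq : ∀ y : H →L[ℂ] H, (∃ x ∈ M, y = x * p) → Ψ (Ψinv y) = y := by
    intro y hy
    obtain ⟨n, hn, hΨn⟩ := hΨ.1.2.2 hy
    exact Function.invFunOn_eq ⟨n, hn, hΨn⟩
  have hleft : ∀ x ∈ N, Ψinv (Ψ x) = x := by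
    intro x hx
    have h1 : ∃ z ∈ M, Ψ x = z * p := hΨ.1.1 hx
    exact hΨ.1.2.1 (hinv_mem _ h1) hx (hinv_eq _ h1)
  refine ⟨fun x => Ψinv (J0 x), ⟨⟨?_, ?_, ?_⟩, ?_, ?_, ?_, ?_⟩⟩
  · intro x hx
    exact hinv_mem _ (hJ0iso.1.1 hx)
  · intro x hx y hy h
    have h2 : J0 x = J0 y := by
      have e1 := hinv_eq _ (hJ0iso.1.1 hx)
      have e2 := hinv_eq _ (hJ0iso.1.1 hy)
      rw [← e1, ← e2]
      show Ψ (Ψinv (J0 x)) = Ψ (Ψinv (J0 y))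
      exact congrArg Ψ h
    exact hJ0iso.1.2.1 hx hy h2
  · intro n hn
    have h1 : ∃ z ∈ M, Ψ n = z * p := hΨ.1.1 hn
    obtain ⟨x, hx, hJx⟩ := hJ0iso.1.2.2 h1
    refine ⟨x, hx, ?_⟩
    show Ψinv (J0 x) = n
    rw [hJx, hleft n hn]
  · intro x hx y hy
    have hx' := hinv_mem _ (hJ0iso.1.1 hx)
    have hy' := hinv_mem _ (hJ0iso.1.1 hy)
    have e1 := hinv_eq _ (hJ0iso.1.1 hx)
    have e2 := hinv_eq _ (hJ0iso.1.1 hy)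
    show Ψinv (J0 (x + y)) = Ψinv (J0 x) + Ψinv (J0 y)
    have h3 : J0 (x+y) = Ψ (Ψinv (J0 x) + Ψinv (J0 y)) := by
      rw [hΨ.2.1 _ hx' _ hy', e1, e2, hJ0iso.2.1 x hx y hy]
    rw [h3, hleft _ (add_mem hx' hy')]
  · intro c x hx
    have hx' := hinv_mem _ (hJ0iso.1.1 hx)
    have e1 := hinv_eq _ (hJ0iso.1.1 hx)
    show Ψinv (J0 (c • x)) = c • Ψinv (J0 x)
    have h3 : J0 (c • x) = Ψ (c • Ψinv (J0 x)) := by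
      rw [hΨ.2.2.1 c _ hx', e1, hJ0iso.2.2.1 c x hx]
    rw [h3, hleft _ (hsmulN c _ hx')]
  · intro x hx
    have hx' := hinv_mem _ (hJ0iso.1.1 hx)
    have e1 := hinv_eq _ (hJ0iso.1.1 hx)
    show Ψinv (J0 (star x)) = star (Ψinv (J0 x))
    have h3 : J0 (star x) = Ψ (star (Ψinv (J0 x))) := by
      rw [hΨ.2.2.2.1 _ hx', e1, hJ0iso.2.2.2.1 x hx]
    rw [h3, hleft _ (star_mem hx')]
  · intro x hx y hy
    have hx' := hinv_mem _ (hJ0iso.1.1 hx)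
    have hy' := hinv_mem _ (hJ0iso.1.1 hy)
    have e1 := hinv_eq _ (hJ0iso.1.1 hx)
    have e2 := hinv_eq _ (hJ0iso.1.1 hy)
    show Ψinv (J0 (x * y + y * x))
        = Ψinv (J0 x) * Ψinv (J0 y) + Ψinv (J0 y) * Ψinv (J0 x)
    have h3 : J0 (x*y + y*x)
        = Ψ (Ψinv (J0 x) * Ψinv (J0 y) + Ψinv (J0 y) * Ψinv (J0 x)) := by
      rw [hΨ.2.2.2.2 _ hx' _ hy', e1, e2, hJ0iso.2.2.2.2 x hx y hy]
    rw [h3, hleft _ (add_mem (mul_mem hx' hy') (mul_mem hy' hx'))]
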